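/- For a single qubit state ρ, if U is drawn uniformly (Haar) from U(2) and s ∈ {0,1} is measured in the computational basis after applying U (with Born probability ⟨s|UρU†|s⟩), then the expectation of the matrix 3·U†|s⟩⟨s|U − I over both U and s equals ρ. -/

import Mathlib

open MeasureTheory Matrix
open scoped ComplexOrder

noncomputable section

instance : MeasurableSpace (Matrix (Fin 2) (Fin 2) ℂ) := by unfold Matrix; infer_instance

namespace ShadowAux

abbrev M2 := Matrix (Fin 2) (Fin 2) ℂ

def E (s : Fin 2) : M2 := single s s 1

/-- the integrand -/
def g (ρ : M2) (i j : Fin 2) (W : M2) : ℂ :=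
  ∑ s : Fin 2, ((W * ρ * Wᴴ) s s *
    (((3 : ℂ) • (Wᴴ * single s s 1 * W) - 1 : M2) i j))

def a : ℝ := (Real.sqrt 2)⁻¹

lemma ha2 : (a : ℂ)^2 = 1/2 := by
  rw [sq, ← Complex.ofReal_mul]
  unfold a
  rw [← mul_inv, Real.mul_self_sqrt (by norm_num)]
  norm_num

def Vx : M2 := !![(a:ℂ), a; a, -a]
def Vy : M2 := !![(a:ℂ), -Complex.I * a; a, Complex.I * a]

def Qx : Fin 2 → M2 := ![!![1/2, 1/2; 1/2, 1/2], !![1/2, -(1/2); -(1/2), 1/2]]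
def Qy : Fin 2 → M2 :=
  ![!![1/2, -Complex.I/2; Complex.I/2, 1/2], !![1/2, Complex.I/2; -Complex.I/2, 1/2]]

lemma hVx : Vx ∈ Matrix.unitaryGroup (Fin 2) ℂ := by
  rw [Matrix.mem_unitaryGroup_iff]
  ext i j
  fin_cases i <;> fin_cases j <;>
    simp [Vx, Matrix.mul_apply, Fin.sum_univ_two, Matrix.star_eq_conjTranspose,
      Matrix.conjTranspose_apply] <;>
    · ring_nf
      simp only [ha2]
      try norm_num
      try ring_nf

lemma hVy : Vy ∈ Matrix.unitaryGroup (Fin 2) ℂ := by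
  rw [Matrix.mem_unitaryGroup_iff]
  ext i j
  fin_cases i <;> fin_cases j <;>
    simp [Vy, Matrix.mul_apply, Fin.sum_univ_two, Matrix.star_eq_conjTranspose,
      Matrix.conjTranspose_apply] <;>
    · ring_nf
      simp only [ha2, Complex.I_sq]
      try norm_num
      try ring_nf

lemma conjX (s : Fin 2) : Vxᴴ * E s * Vx = Qx s := by
  fin_cases s <;>
  · ext i j
    fin_cases i <;> fin_cases j <;>
      simp [Vx, Qx, E, Matrix.mul_apply, Fin.sum_univ_two, Matrix.conjTranspose_apply,
        Matrix.single] <;>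
      · ring_nf
        simp only [ha2, Complex.I_sq]
        try norm_num
        try ring_nf

lemma conjY (s : Fin 2) : Vyᴴ * E s * Vy = Qy s := by
  fin_cases s <;>
  · ext i j
    fin_cases i <;> fin_cases j <;>
      simp [Vy, Qy, E, Matrix.mul_apply, Fin.sum_univ_two, Matrix.conjTranspose_apply,
        Matrix.single] <;>
      · ring_nf
        simp only [ha2, Complex.I_sq]
        try norm_num
        try ring_nf

lemma step (ρ V W : M2) (i j : Fin 2) :
    g ρ i j (V * W) =
    ∑ s : Fin 2, (((Vᴴ * E s * V) * (W * ρ * Wᴴ)).trace *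
      (((3 : ℂ) • (Wᴴ * (Vᴴ * E s * V) * W) - 1 : M2) i j)) := by
  unfold g
  refine Finset.sum_congr rfl fun s _ => ?_
  have h1 : (V * W * ρ * (V * W)ᴴ) s s = ((Vᴴ * E s * V) * (W * ρ * Wᴴ)).trace := by
    fin_cases s <;>
      simp [E, Matrix.trace, Matrix.mul_apply, Matrix.conjTranspose_apply,
        Fin.sum_univ_two, Matrix.single, Matrix.diag] <;> ring
  have h2 : (V * W)ᴴ * single s s 1 * (V * W) = Wᴴ * (Vᴴ * E s * V) * W := by
    show (V * W)ᴴ * E s * (V * W) = _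
    rw [conjTranspose_mul]
    noncomm_ring
  rw [h1, h2]

lemma core (Y B C : M2) (i j : Fin 2) :
    (∑ s : Fin 2, ((E s * Y).trace * (((3 : ℂ) • (B * E s * C) - 1 : M2) i j)))
    + (∑ s : Fin 2, ((Qx s * Y).trace * (((3 : ℂ) • (B * Qx s * C) - 1 : M2) i j)))
    + (∑ s : Fin 2, ((Qy s * Y).trace * (((3 : ℂ) • (B * Qy s * C) - 1 : M2) i j)))
    = 3 * (B * Y * C) i j + 3 * Y.trace * ((B * C) i j) - 3 * Y.trace * ((1 : M2) i j) := by
  fin_cases i <;> fin_cases j <;>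
    simp [E, Qx, Qy, Matrix.trace, Matrix.mul_apply, Fin.sum_univ_two,
      Matrix.single, Matrix.smul_apply, Matrix.sub_apply, Matrix.one_apply,
      Matrix.diag, smul_eq_mul] <;>
    · ring_nf
      simp only [Complex.I_sq]
      ring_nf

lemma key (ρ : M2) (hτ : ρ.trace = 1) (U : M2) (hU : Uᴴ * U = 1) (i j : Fin 2) :
    g ρ i j U + g ρ i j (Vx * U) + g ρ i j (Vy * U) = 3 * ρ i j := by
  have h1 : g ρ i j U = g ρ i j (1 * U) := by rw [one_mul]
  rw [h1, step, step, step]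
  simp only [conjTranspose_one, one_mul, mul_one, conjX, conjY]
  rw [core]
  have htr : (U * ρ * Uᴴ).trace = 1 := by
    rw [Matrix.trace_mul_cycle, hU, one_mul, hτ]
  have hm : Uᴴ * (U * ρ * Uᴴ) * U = ρ := by
    simp only [← Matrix.mul_assoc, hU, one_mul]
    rw [Matrix.mul_assoc, hU, mul_one]
  rw [htr, hm, hU]
  simp

lemma pform (ρ W : M2) (s : Fin 2) :
    (W * ρ * Wᴴ) s s = ∑ k : Fin 2, ∑ l : Fin 2, W s k * ρ k l * (starRingEnd ℂ) (W s l) := by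
  simp [Matrix.mul_apply, Matrix.conjTranspose_apply, Fin.sum_univ_two]
  ring

lemma entry_form (ρ W : M2) (i j : Fin 2) :
    g ρ i j W = ∑ s : Fin 2, ((W * ρ * Wᴴ) s s *
      (3 * (starRingEnd ℂ) (W s i) * W s j - (1 : M2) i j)) := by
  unfold g
  refine Finset.sum_congr rfl fun s _ => ?_
  congr 1
  fin_cases s <;>
    simp [Matrix.mul_apply, Matrix.conjTranspose_apply, Fin.sum_univ_two,
      Matrix.single, Matrix.smul_apply, Matrix.sub_apply, smul_eq_mul, mul_assoc]

end ShadowAux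

open ShadowAux

theorem shadow_unbiased_haar
    (ρ : Matrix (Fin 2) (Fin 2) ℂ) (hρ : ρ.PosSemidef) (hτ : ρ.trace = 1)
    (μ : Measure (Matrix.unitaryGroup (Fin 2) ℂ)) [IsProbabilityMeasure μ]
    (hHaar : ∀ V : Matrix.unitaryGroup (Fin 2) ℂ, μ.map (fun U => V * U) = μ) :
    ∀ i j : Fin 2,
      (∫ U : Matrix.unitaryGroup (Fin 2) ℂ,
        ∑ s : Fin 2,
          (((U : Matrix (Fin 2) (Fin 2) ℂ) * ρ * (U : Matrix (Fin 2) (Fin 2) ℂ)ᴴ) s s *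
            (((3 : ℂ) • ((U : Matrix (Fin 2) (Fin 2) ℂ)ᴴ * Matrix.single s s 1 *
              (U : Matrix (Fin 2) (Fin 2) ℂ)) - 1 : Matrix (Fin 2) (Fin 2) ℂ) i j)) ∂μ) = ρ i j := by
  intro i j
  classical
  set f : Matrix.unitaryGroup (Fin 2) ℂ → ℂ := fun U => g ρ i j (U : M2) with hf
  show (∫ U : Matrix.unitaryGroup (Fin 2) ℂ, f U ∂μ) = ρ i j
  -- entry measurability
  have hentry : ∀ k l : Fin 2, Measurable fun U : Matrix.unitaryGroup (Fin 2) ℂ => (U : M2) k l := by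
    intro k l
    exact (measurable_pi_apply l).comp ((measurable_pi_apply k).comp measurable_subtype_coe)
  have hmeasf : Measurable f := by
    have hf2 : f = fun U : Matrix.unitaryGroup (Fin 2) ℂ => ∑ s : Fin 2,
        ((∑ k : Fin 2, ∑ l : Fin 2, (U : M2) s k * ρ k l * (starRingEnd ℂ) ((U : M2) s l)) *
          (3 * (starRingEnd ℂ) ((U : M2) s i) * (U : M2) s j - (1 : M2) i j)) := by
      funext U
      show g ρ i j (U : M2) = _
      rw [entry_form]
      exact Finset.sum_congr rfl fun s _ => by rw [pform]
    rw [hf2]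
    refine Finset.measurable_sum _ fun s _ => Measurable.mul ?_ ?_
    · refine Finset.measurable_sum _ fun k _ => Finset.measurable_sum _ fun l _ => ?_
      exact ((hentry s k).mul_const _).mul
        (RCLike.continuous_conj.measurable.comp (hentry s l))
    · exact ((((RCLike.continuous_conj.measurable.comp (hentry s i)).const_mul _).mul
        (hentry s j)).sub measurable_const)
  set C : ℝ := ∑ k : Fin 2, ∑ l : Fin 2, ‖ρ k l‖ with hC
  have hCnn : 0 ≤ C := Finset.sum_nonneg fun k _ => Finset.sum_nonneg fun l _ => norm_nonneg _
  have hbound : ∀ U : Matrix.unitaryGroup (Fin 2) ℂ, ‖f U‖ ≤ 2 * (C * 4) := by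
    intro U
    have hb : ∀ k l : Fin 2, ‖(U : M2) k l‖ ≤ 1 := fun k l =>
      entry_norm_bound_of_unitary U.2 k l
    show ‖g ρ i j (U : M2)‖ ≤ _
    rw [entry_form]
    refine (norm_sum_le _ _).trans ?_
    have hterm : ∀ s : Fin 2,
        ‖((U : M2) * ρ * (U : M2)ᴴ) s s *
          (3 * (starRingEnd ℂ) ((U : M2) s i) * (U : M2) s j - (1 : M2) i j)‖ ≤ C * 4 := by
      intro s
      rw [norm_mul]
      have hp : ‖((U : M2) * ρ * (U : M2)ᴴ) s s‖ ≤ C := by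
        rw [pform]
        refine (norm_sum_le _ _).trans (Finset.sum_le_sum fun k _ => ?_)
        refine (norm_sum_le _ _).trans (Finset.sum_le_sum fun l _ => ?_)
        rw [norm_mul, norm_mul, RCLike.norm_conj]
        have hkl : ‖(U : M2) s k‖ * ‖(U : M2) s l‖ ≤ 1 :=
          mul_le_one₀ (hb s k) (norm_nonneg _) (hb s l)
        nlinarith [norm_nonneg (ρ k l)]
      have hq : ‖3 * (starRingEnd ℂ) ((U : M2) s i) * (U : M2) s j - (1 : M2) i j‖ ≤ 4 := by
        refine (norm_sub_le _ _).trans ?_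
        have h1 : ‖(1 : M2) i j‖ ≤ 1 := by
          by_cases h : i = j <;> simp [Matrix.one_apply, h]
        have h3 : ‖(3 : ℂ) * (starRingEnd ℂ) ((U : M2) s i) * (U : M2) s j‖ ≤ 3 := by
          rw [norm_mul, norm_mul, RCLike.norm_conj]
          have : ‖(3 : ℂ)‖ = 3 := by norm_num
          rw [this]
          have hij : ‖(U : M2) s i‖ * ‖(U : M2) s j‖ ≤ 1 :=
            mul_le_one₀ (hb s i) (norm_nonneg _) (hb s j)
          nlinarith []
        linarith
      exact mul_le_mul hp hq (norm_nonneg _) hCnn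
    refine le_trans (Finset.sum_le_sum fun s _ => hterm s) ?_
    rw [Fin.sum_univ_two]
    linarith
  have hint : Integrable f μ := by
    refine (integrable_const (2 * (C * 4))).mono' hmeasf.aestronglyMeasurable ?_
    exact Filter.Eventually.of_forall hbound
  have hmul : ∀ V : Matrix.unitaryGroup (Fin 2) ℂ, Measurable fun U : Matrix.unitaryGroup (Fin 2) ℂ => V * U := by
    intro V
    have hm : Measurable fun U : Matrix.unitaryGroup (Fin 2) ℂ => (V : M2) * (U : M2) := by
      apply measurable_pi_lambda
      intro k
      apply measurable_pi_lambda
      intro l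
      simp only [Matrix.mul_apply, Fin.sum_univ_two]
      exact ((hentry 0 l).const_mul _).add ((hentry 1 l).const_mul _)
    exact hm.subtype_mk
  have hshift : ∀ V : Matrix.unitaryGroup (Fin 2) ℂ, ∫ U : Matrix.unitaryGroup (Fin 2) ℂ, f U ∂μ = ∫ U : Matrix.unitaryGroup (Fin 2) ℂ, f (V * U) ∂μ := by
    intro V
    conv_lhs => rw [← hHaar V]
    exact integral_map (hmul V).aemeasurable
      (by rw [hHaar V]; exact hmeasf.aestronglyMeasurable)
  have hint2 : ∀ V : Matrix.unitaryGroup (Fin 2) ℂ, Integrable (fun U : Matrix.unitaryGroup (Fin 2) ℂ => f (V * U)) μ := by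
    intro V
    exact (integrable_map_measure (by rw [hHaar V]; exact hmeasf.aestronglyMeasurable)
      (hmul V).aemeasurable).mp (by rw [hHaar V]; exact hint)
  set Vx' : Matrix.unitaryGroup (Fin 2) ℂ := ⟨Vx, hVx⟩ with hVx'
  set Vy' : Matrix.unitaryGroup (Fin 2) ℂ := ⟨Vy, hVy⟩ with hVy'
  have hkey : ∀ U : Matrix.unitaryGroup (Fin 2) ℂ, f U + f (Vx' * U) + f (Vy' * U) = 3 * ρ i j := by
    intro U
    have hU : (U : M2)ᴴ * (U : M2) = 1 := by
      rw [← Matrix.star_eq_conjTranspose]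
      exact U.2.1
    have h := key ρ hτ (U : M2) hU i j
    have e1 : ((Vx' * U : Matrix.unitaryGroup (Fin 2) ℂ) : M2) = Vx * (U : M2) := rfl
    have e2 : ((Vy' * U : Matrix.unitaryGroup (Fin 2) ℂ) : M2) = Vy * (U : M2) := rfl
    show g ρ i j (U : M2) + g ρ i j ((Vx' * U : Matrix.unitaryGroup (Fin 2) ℂ) : M2) +
      g ρ i j ((Vy' * U : Matrix.unitaryGroup (Fin 2) ℂ) : M2) = 3 * ρ i j
    rw [e1, e2]
    exact h
  have hconst : ∫ U : Matrix.unitaryGroup (Fin 2) ℂ, (f U + f (Vx' * U) + f (Vy' * U)) ∂μ = 3 * ρ i j := by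
    rw [show (fun U : Matrix.unitaryGroup (Fin 2) ℂ => f U + f (Vx' * U) + f (Vy' * U)) = fun _ => 3 * ρ i j from
      funext hkey]
    simp [integral_const]
  have h12 : Integrable (fun U : Matrix.unitaryGroup (Fin 2) ℂ => f U + f (Vx' * U)) μ :=
    hint.add (hint2 Vx')
  rw [integral_add h12 (hint2 Vy'), integral_add hint (hint2 Vx')] at hconst
  rw [← hshift Vx', ← hshift Vy'] at hconst
  have h3 : (3 : ℂ) * ∫ U : Matrix.unitaryGroup (Fin 2) ℂ, f U ∂μ = 3 * ρ i j := by rw [← hconst]; ring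
  exact mul_left_cancel₀ three_ne_zero h3
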